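/- (Uniform positive definiteness of W for small δ.) Under the hypotheses guaranteeing Q positive definite (L₂ ≥ 0, k_p − L₁ > 0, k_d − L₂ > 0, k_i > 0, (k_p − L₁)(k_d − L₂) − k_i > 0, [(k_p − L₁)(k_d − L₂) − k_i]² > L₂² k_i (k_d − L₂), μ = 2((k_p − L₁)(k_d − L₂) + k_i)/(4(k_p − L₁) + L₂²)), and given bounds L₁, L₂ so that φ ranges over [k_p − L₁, k_p + L₁], ψ over [k_d − L₂, k_d + L₂] and a over [−L₂, L₂], there exists δ* > 0 such that for every 0 < δ < δ* and every choice of φ, ψ, a in these ranges, the symmetric 3×3 matrix W = [[δ k_i, δφ/2, δψ/2], [δφ/2, −k_i + μφ, −(μa + δ)/2], [δψ/2, −(μa + δ)/2, −μ + ψ]] is positive definite. -/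

import Mathlib

private lemma quad_aux_W (A B K u v : ℝ) (hA : 0 ≤ A) (hB : 0 ≤ B) (hK : K^2 ≤ 4*A*B) :
    0 ≤ A*u^2 - K*(u*v) + B*v^2 := by
  rcases eq_or_lt_of_le hA with h | h
  · have hK0 : K = 0 := by nlinarith [sq_nonneg K]
    rw [hK0, ← h]
    have := mul_nonneg hB (sq_nonneg v)
    linarith
  · nlinarith [sq_nonneg (2*A*u - K*v), mul_nonneg (sub_nonneg.2 hK) (sq_nonneg v), h,
      mul_nonneg hB (sq_nonneg v)]

private lemma final_aux_W (δ ki t φ ψ e u v q : ℝ) (hδ0 : 0 < δ) (ht : 0 < t) (hδt : δ < t/2)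
    (hco : 0 < ki*t - 2*δ*(φ^2+ψ^2)) (hq : t*(u^2+v^2) ≤ q)
    (hne : e ≠ 0 ∨ u ≠ 0 ∨ v ≠ 0) :
    0 < δ*ki*e^2 + δ*φ*(e*u) + δ*ψ*(e*v) + q - δ*(u*v) := by
  set G := δ*ki*e^2 + δ*φ*(e*u) + δ*ψ*(e*v) + q - δ*(u*v) with hG
  have id1 : 8*t*G = 8*t*(q - t*(u^2+v^2)) + (t*u+4*δ*φ*e)^2 + (t*v+4*δ*ψ*e)^2
      + 4*t*δ*(u-v)^2 + 2*t*(t-2*δ)*(u^2+v^2) + 8*δ*(ki*t-2*δ*(φ^2+ψ^2))*e^2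
      + 5*t^2*(u^2+v^2) := by rw [hG]; ring
  have n1 : 0 ≤ 8*t*(q - t*(u^2+v^2)) := mul_nonneg (by linarith) (by linarith)
  have n2 : 0 ≤ (t*u+4*δ*φ*e)^2 := sq_nonneg _
  have n3 : 0 ≤ (t*v+4*δ*ψ*e)^2 := sq_nonneg _
  have n4 : 0 ≤ 4*t*δ*(u-v)^2 := by positivity
  have n5 : 0 ≤ 2*t*(t-2*δ)*(u^2+v^2) :=
    mul_nonneg (mul_nonneg (by linarith) (by linarith)) (by positivity)
  have n6 : 0 ≤ 8*δ*(ki*t-2*δ*(φ^2+ψ^2))*e^2 :=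
    mul_nonneg (mul_nonneg (by linarith) hco.le) (sq_nonneg e)
  have h8 : 0 < 8*t*G := by
    rcases hne with h | h | h
    · have : 0 < e^2 := lt_of_le_of_ne (sq_nonneg e) (Ne.symm (pow_ne_zero 2 h))
      have n6' : 0 < 8*δ*(ki*t-2*δ*(φ^2+ψ^2))*e^2 :=
        mul_pos (mul_pos (by linarith) hco) this
      have n7 : 0 ≤ 5*t^2*(u^2+v^2) := by positivity
      linarith
    · have hu2 : 0 < u^2 := lt_of_le_of_ne (sq_nonneg u) (Ne.symm (pow_ne_zero 2 h))
      have n7a : 0 < 5*t^2*u^2 := mul_pos (by positivity) hu2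
      have n7b : 0 ≤ 5*t^2*v^2 := by positivity
      linarith
    · have hv2 : 0 < v^2 := lt_of_le_of_ne (sq_nonneg v) (Ne.symm (pow_ne_zero 2 h))
      have n7a : 0 < 5*t^2*v^2 := mul_pos (by positivity) hv2
      have n7b : 0 ≤ 5*t^2*u^2 := by positivity
      linarith
  nlinarith [h8, ht]

set_option maxHeartbeats 1000000 in
/-- **Uniform positive definiteness of `W` for small `δ`.**
Under the hypotheses guaranteeing positive definiteness of `Q`, there exists `δ* > 0` such
that for every `0 < δ < δstar` and every `φ ∈ [k_p − L₁, k_p + L₁]`, `ψ ∈ [k_d − L₂, k_d + L₂]`,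
`a ∈ [−L₂, L₂]`, the matrix `W` is positive definite. -/
theorem matrix_W_posdef_for_small_delta
    (kp kd ki L1 L2 μ : ℝ)
    (hL2 : 0 ≤ L2)
    (h1 : 0 < kp - L1) (h2 : 0 < kd - L2) (h3 : 0 < ki)
    (h4 : 0 < (kp - L1) * (kd - L2) - ki)
    (h5 : ((kp - L1) * (kd - L2) - ki) ^ 2 > L2 ^ 2 * (ki * (kd - L2)))
    (hμ : μ = 2 * ((kp - L1) * (kd - L2) + ki) / (4 * (kp - L1) + L2 ^ 2)) :
    ∃ δstar > (0:ℝ), ∀ δ : ℝ, 0 < δ → δ < δstar →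
      ∀ φ ψ a : ℝ,
        kp - L1 ≤ φ → φ ≤ kp + L1 →
        kd - L2 ≤ ψ → ψ ≤ kd + L2 →
        -L2 ≤ a → a ≤ L2 →
        (!![δ * ki, δ * φ / 2, δ * ψ / 2;
            δ * φ / 2, -ki + μ * φ, -(μ * a + δ) / 2;
            δ * ψ / 2, -(μ * a + δ) / 2, -μ + ψ]).PosDef := by
  have hden : (0:ℝ) < 4*(kp-L1) + L2^2 := by nlinarith [sq_nonneg L2]
  have hμpos : 0 < μ := by
    rw [hμ]
    apply div_pos _ hden
    nlinarith
  have hB0 : 0 < kd - L2 - μ := by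
    have : μ < kd - L2 := by
      rw [hμ, div_lt_iff₀ hden]; nlinarith
    linarith
  have hkey : (4*(μ*(kp-L1) - ki)*(kd - L2 - μ) - μ^2*L2^2) * (4*(kp-L1) + L2^2)
      = 4*(((kp-L1)*(kd-L2) - ki)^2 - L2^2*(ki*(kd-L2))) := by
    rw [hμ]; field_simp; ring
  have hD : 0 < 4*(μ*(kp-L1) - ki)*(kd - L2 - μ) - μ^2*L2^2 := by
    by_contra hc
    push_neg at hc
    nlinarith [hkey, h5, hden]
  have hA0 : 0 < μ*(kp-L1) - ki := by
    by_contra hc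
    push_neg at hc
    nlinarith [sq_nonneg (μ*L2), hB0, hD]
  obtain ⟨t, ht, htA, htB, htD⟩ :
      ∃ t : ℝ, 0 < t ∧ t ≤ μ*(kp-L1) - ki ∧ t ≤ kd - L2 - μ ∧
        4*t*((μ*(kp-L1) - ki) + (kd - L2 - μ)) ≤ 4*(μ*(kp-L1) - ki)*(kd - L2 - μ) - μ^2*L2^2 := by
    refine ⟨min (min (μ*(kp-L1) - ki) (kd - L2 - μ))
        ((4*(μ*(kp-L1) - ki)*(kd - L2 - μ) - μ^2*L2^2)/(4*((μ*(kp-L1) - ki) + (kd - L2 - μ)))),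
      lt_min (lt_min hA0 hB0) (div_pos hD (by linarith)), ?_, ?_, ?_⟩
    · exact le_trans (min_le_left _ _) (min_le_left _ _)
    · exact le_trans (min_le_left _ _) (min_le_right _ _)
    · have h := min_le_right (min (μ*(kp-L1) - ki) (kd - L2 - μ))
        ((4*(μ*(kp-L1) - ki)*(kd - L2 - μ) - μ^2*L2^2)/(4*((μ*(kp-L1) - ki) + (kd - L2 - μ))))
      rw [le_div_iff₀ (by linarith : (0:ℝ) < 4*((μ*(kp-L1) - ki) + (kd - L2 - μ)))] at h
      nlinarith [h]
  refine ⟨min (t/2) (ki*t/(2*((kp+L1)^2+(kd+L2)^2+1))), lt_min (by linarith)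
      (div_pos (mul_pos h3 ht) (by positivity)), ?_⟩
  intro δ hδ0 hδs φ ψ a hφ1 hφ2 hψ1 hψ2 ha1 ha2
  have hδt : δ < t/2 := lt_of_lt_of_le hδs (min_le_left _ _)
  have hδk : 2*δ*((kp+L1)^2+(kd+L2)^2+1) < ki*t := by
    have h := lt_of_lt_of_le hδs (min_le_right _ _)
    rw [lt_div_iff₀ (by positivity)] at h
    linarith
  have hφ0 : 0 < φ := lt_of_lt_of_le h1 hφ1
  have hψ0 : 0 < ψ := lt_of_lt_of_le h2 hψ1
  have hφsq : φ^2 ≤ (kp+L1)^2 := pow_le_pow_left₀ hφ0.le hφ2 2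
  have hψsq : ψ^2 ≤ (kd+L2)^2 := pow_le_pow_left₀ hψ0.le hψ2 2
  have hasq : a^2 ≤ L2^2 := sq_le_sq' ha1 ha2
  have hA : μ*(kp-L1) - ki ≤ μ*φ - ki := by
    linarith [mul_nonneg hμpos.le (by linarith : (0:ℝ) ≤ φ - (kp - L1))]
  have hB : kd - L2 - μ ≤ ψ - μ := by linarith
  have hAnn : 0 ≤ μ*φ - ki - t := by linarith
  have hBnn : 0 ≤ ψ - μ - t := by linarith
  have step1 : μ^2*L2^2 ≤ 4*((μ*(kp-L1) - ki) - t)*((kd - L2 - μ) - t) := by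
    nlinarith [htD, sq_nonneg t, sq_nonneg L2]
  have step2 : 4*((μ*(kp-L1) - ki) - t)*((kd - L2 - μ) - t) ≤ 4*(μ*φ - ki - t)*(ψ - μ - t) := by
    have := mul_le_mul (by linarith : (μ*(kp-L1) - ki) - t ≤ μ*φ - ki - t)
      (by linarith : (kd - L2 - μ) - t ≤ ψ - μ - t) (by linarith) hAnn
    linarith
  have step3 : μ^2*a^2 ≤ μ^2*L2^2 := mul_le_mul_of_nonneg_left hasq (sq_nonneg μ)
  have h4AB : μ^2*a^2 ≤ 4*(μ*φ - ki - t)*(ψ - μ - t) := by linarith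
  have hco : 0 < ki*t - 2*δ*(φ^2+ψ^2) := by
    have e1 : δ*φ^2 ≤ δ*(kp+L1)^2 := mul_le_mul_of_nonneg_left hφsq hδ0.le
    have e2 : δ*ψ^2 ≤ δ*(kd+L2)^2 := mul_le_mul_of_nonneg_left hψsq hδ0.le
    nlinarith [hδk, e1, e2, hδ0]
  have key : ∀ e u v : ℝ, (e ≠ 0 ∨ u ≠ 0 ∨ v ≠ 0) →
      0 < δ*ki*e^2 + δ*φ*(e*u) + δ*ψ*(e*v) + (-ki+μ*φ)*u^2 - (μ*a+δ)*(u*v) + (-μ+ψ)*v^2 := by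
    intro e u v hne
    have hQ : 0 ≤ (μ*φ - ki - t)*u^2 - (μ*a)*(u*v) + (ψ - μ - t)*v^2 :=
      quad_aux_W (μ*φ - ki - t) (ψ - μ - t) (μ*a) u v hAnn hBnn (by linarith [h4AB, sq_abs a, sq_nonneg (μ*a)])
    have hq : t*(u^2+v^2) ≤ (-ki+μ*φ)*u^2 - μ*a*(u*v) + (-μ+ψ)*v^2 := by linarith [hQ]
    have := final_aux_W δ ki t φ ψ e u v ((-ki+μ*φ)*u^2 - μ*a*(u*v) + (-μ+ψ)*v^2)
      hδ0 ht hδt hco hq hne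
    linarith [this]
  rw [Matrix.posDef_iff_dotProduct_mulVec]
  constructor
  · ext i j
    fin_cases i <;> fin_cases j <;> simp [Matrix.conjTranspose_apply]
  · intro x hx
    have hx' : x 0 ≠ 0 ∨ x 1 ≠ 0 ∨ x 2 ≠ 0 := by
      by_contra hc
      push_neg at hc
      exact hx (funext fun i => by fin_cases i <;> simp [hc.1, hc.2.1, hc.2.2])
    have hk := key (x 0) (x 1) (x 2) hx'
    simp [dotProduct, Matrix.mulVec, Fin.sum_univ_three]
    linarith only [hk]
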